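/- Let G be a finite group, H a subgroup of G that is a perfect code of G, and g ∈ G. Then the conjugate subgroup g⁻¹Hg is also a perfect code of G. -/
import Mathlib


/-- A subgroup `H` of a group `G` is a *perfect code* of `G` if `H` admits an
inverse-closed left transversal in `G`, i.e. there is a set `T ⊆ G` with
`T⁻¹ = T` such that every element of `G` lies in exactly one left coset `tH`, `t ∈ T`. -/
def IsPerfectCode {G : Type*} [Group G] (H : Subgroup G) : Prop :=
  ∃ T : Set G, T⁻¹ = T ∧ ∀ g : G, ∃! t : G, t ∈ T ∧ t⁻¹ * g ∈ H

theorem perfectCode_conj {G : Type*} [Group G] [Finite G] (H : Subgroup G)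
    (hH : IsPerfectCode H) (g : G) :
    IsPerfectCode (H.map (MulAut.conj g⁻¹).toMonoidHom) := by
  obtain ⟨T, hTinv, hT⟩ := hH
  have hmem : ∀ y : G, y ∈ H.map (MulAut.conj g⁻¹).toMonoidHom ↔ g * y * g⁻¹ ∈ H := by
    intro y
    simp only [Subgroup.mem_map, MulEquiv.coe_toMonoidHom, MulAut.conj_apply, inv_inv]
    constructor
    · rintro ⟨h, hh, rfl⟩; group; simpa using hh
    · intro hy; exact ⟨g * y * g⁻¹, hy, by group⟩
  refine ⟨(fun t => g⁻¹ * t * g) '' T, ?_, ?_⟩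
  · ext x
    simp only [Set.mem_inv, Set.mem_image]
    constructor
    · rintro ⟨t, ht, hxt⟩
      refine ⟨t⁻¹, by rw [← hTinv]; simpa using ht, ?_⟩
      have : x⁻¹ = g⁻¹ * t * g := hxt.symm
      rw [← inv_inv x, this]; group
    · rintro ⟨t, ht, rfl⟩
      refine ⟨t⁻¹, by rw [← hTinv]; simpa using ht, by group⟩
  · intro x
    obtain ⟨t, ⟨htT, htH⟩, huniq⟩ := hT (g * x * g⁻¹)
    refine ⟨g⁻¹ * t * g, ⟨⟨t, htT, rfl⟩, ?_⟩, ?_⟩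
    · rw [hmem]
      convert htH using 1; group
    · rintro y ⟨⟨s, hsT, rfl⟩, hy⟩
      rw [hmem] at hy
      have hs : s = t := by
        refine huniq s ⟨hsT, ?_⟩
        convert hy using 1; group
      rw [hs]
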